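/- Let B ≥ 1 and let 𝒬_B = { n ∈ ℕ : n = a²b³, b ≤ B, b squarefree }. For real numbers X, H ≥ 2, the number of f ∈ 𝒬_B with X < f ≤ X + H is O(H·X^{-1/2}·B + B). -/
import Mathlib


/-- The set of positive integers of the form `a² b³` with `b` squarefree and `b ≤ B`. -/
def QB (B : ℝ) : Set ℕ :=
  {n : ℕ | ∃ a b : ℕ, 0 < a ∧ 0 < b ∧ Squarefree b ∧ (b : ℝ) ≤ B ∧ n = a^2 * b^3}

theorem count_QB_short_interval :
    ∃ C : ℝ, ∀ B : ℝ, 1 ≤ B → ∀ X H : ℝ, 2 ≤ X → 2 ≤ H →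
      ({f : ℕ | X < (f : ℝ) ∧ (f : ℝ) ≤ X + H ∧ f ∈ QB B}.ncard : ℝ)
        ≤ C * (H * X^(-(1:ℝ)/2) * B + B) := by
  use 1
  intro B hB X H hX hH
  have hXpos : (0:ℝ) < X := by linarith
  have hsX : (0:ℝ) < Real.sqrt X := Real.sqrt_pos.2 hXpos
  set lo : ℕ → ℕ := fun b => ⌊Real.sqrt (X / (b:ℝ)^3)⌋₊ with hlo_def
  set hi : ℕ → ℕ := fun b => ⌊Real.sqrt ((X+H) / (b:ℝ)^3)⌋₊ with hhi_def
  set T : Finset (ℕ × ℕ) := (Finset.Icc 1 ⌊B⌋₊).biUnion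
    (fun b => (Finset.Ioc (lo b) (hi b)).image (fun a => (a, b))) with hT_def
  set S := {f : ℕ | X < (f : ℝ) ∧ (f : ℝ) ≤ X + H ∧ f ∈ QB B} with hS_def
  set g : ℕ × ℕ → ℕ := fun p => p.1^2 * p.2^3 with hg_def
  -- Step 1 : S ⊆ g '' T
  have hsub : S ⊆ g '' ↑T := by
    rintro f ⟨hfX, hfXH, a, b, ha, hb, hsf, hbB, hfab⟩
    have hbpos : (0:ℝ) < (b:ℝ) := by exact_mod_cast hb
    have hb3 : (0:ℝ) < (b:ℝ)^3 := by positivity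
    have hapos : (0:ℝ) < (a:ℝ) := by exact_mod_cast ha
    have hfr : (f:ℝ) = (a:ℝ)^2 * (b:ℝ)^3 := by rw [hfab]; push_cast; ring
    refine ⟨(a, b), ?_, by simp [hg_def, hfab]⟩
    simp only [hT_def, Finset.coe_biUnion, Set.mem_iUnion, Finset.mem_coe]
    refine ⟨b, Finset.mem_Icc.2 ⟨hb, Nat.le_floor hbB⟩, ?_⟩
    refine Finset.mem_image.2 ⟨a, Finset.mem_Ioc.2 ⟨?_, ?_⟩, rfl⟩
    · -- lo b < a
      have h1 : X / (b:ℝ)^3 < (a:ℝ)^2 := (div_lt_iff₀ hb3).2 (by rw [hfr] at hfX; linarith)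
      have h2 : Real.sqrt (X / (b:ℝ)^3) < (a:ℝ) := (Real.sqrt_lt' hapos).2 h1
      have h3 : ((lo b : ℕ) : ℝ) ≤ Real.sqrt (X / (b:ℝ)^3) :=
        Nat.floor_le (Real.sqrt_nonneg _)
      exact_mod_cast h3.trans_lt h2
    · -- a ≤ hi b
      have h1 : (a:ℝ)^2 ≤ (X + H) / (b:ℝ)^3 := (le_div_iff₀ hb3).2 (by rw [hfr] at hfXH; linarith)
      have h2 : (a:ℝ) ≤ Real.sqrt ((X+H) / (b:ℝ)^3) :=
        (Real.le_sqrt hapos.le (by positivity)).2 h1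
      exact Nat.le_floor h2
  have h1 : (S.ncard : ℝ) ≤ (T.card : ℝ) := by
    have := (Set.ncard_le_ncard hsub ((T.finite_toSet).image g)).trans
      ((Set.ncard_image_le T.finite_toSet).trans_eq (Set.ncard_coe_finset T))
    exact_mod_cast this
  -- the key sqrt inequality
  have key : Real.sqrt (X + H) ≤ Real.sqrt X + H / (2 * Real.sqrt X) := by
    have hs : Real.sqrt X ^ 2 = X := Real.sq_sqrt hXpos.le
    have hmul : 2 * Real.sqrt X * (H / (2 * Real.sqrt X)) = H := by field_simp
    have h2 : X + H ≤ (Real.sqrt X + H / (2 * Real.sqrt X))^2 := by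
      nlinarith [sq_nonneg (H / (2 * Real.sqrt X))]
    calc Real.sqrt (X + H) ≤ Real.sqrt ((Real.sqrt X + H / (2 * Real.sqrt X))^2) :=
          Real.sqrt_le_sqrt h2
      _ = Real.sqrt X + H / (2 * Real.sqrt X) := Real.sqrt_sq (by positivity)
  -- Step 2 : bound each fiber
  have termbound : ∀ b ∈ Finset.Icc 1 ⌊B⌋₊,
      (((Finset.Ioc (lo b) (hi b)).image (fun a => (a, b))).card : ℝ)
        ≤ H / (2 * Real.sqrt X) + 1 := by
    intro b hbmem
    have hb1 : 1 ≤ b := (Finset.mem_Icc.1 hbmem).1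
    have hbpos : (0:ℝ) < (b:ℝ) := by exact_mod_cast hb1
    have hb3 : (1:ℝ) ≤ (b:ℝ)^3 := by
      have h1b : (1:ℝ) ≤ (b:ℝ) := by exact_mod_cast hb1
      nlinarith [h1b, sq_nonneg ((b:ℝ) - 1), sq_nonneg ((b:ℝ) + 1)]
    have hHpos : (0:ℝ) ≤ H := by linarith
    have hcard : ((Finset.Ioc (lo b) (hi b)).image (fun a => (a, b))).card
        ≤ hi b - lo b := by
      refine Finset.card_image_le.trans ?_
      rw [Nat.card_Ioc]
    rcases le_or_gt (hi b) (lo b) with h | h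
    · have : ((Finset.Ioc (lo b) (hi b)).image (fun a => (a, b))).card = 0 := by
        omega
      rw [this]; push_cast; positivity
    · have hcastle : (((Finset.Ioc (lo b) (hi b)).image (fun a => (a, b))).card : ℝ)
          ≤ (hi b : ℝ) - (lo b : ℝ) := by
        calc (((Finset.Ioc (lo b) (hi b)).image (fun a => (a, b))).card : ℝ)
            ≤ ((hi b - lo b : ℕ) : ℝ) := by exact_mod_cast hcard
          _ = (hi b : ℝ) - (lo b : ℝ) := by rw [Nat.cast_sub h.le]
      have hlob : Real.sqrt (X / (b:ℝ)^3) - 1 < (lo b : ℝ) := by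
        have := Nat.lt_floor_add_one (Real.sqrt (X / (b:ℝ)^3))
        simp only [hlo_def]
        push_cast
        linarith
      have hhib : (hi b : ℝ) ≤ Real.sqrt ((X+H) / (b:ℝ)^3) :=
        Nat.floor_le (Real.sqrt_nonneg _)
      -- sqrt((X+H)/b³) - sqrt(X/b³) ≤ H/(2√X)
      have hsqb : (0:ℝ) < Real.sqrt ((b:ℝ)^3) := Real.sqrt_pos.2 (by positivity)
      have hsqb1 : (1:ℝ) ≤ Real.sqrt ((b:ℝ)^3) := by
        rw [show (1:ℝ) = Real.sqrt 1 by simp]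
        exact Real.sqrt_le_sqrt hb3
      have hdiv1 : Real.sqrt ((X+H) / (b:ℝ)^3) = Real.sqrt (X+H) / Real.sqrt ((b:ℝ)^3) :=
        Real.sqrt_div (by linarith : (0:ℝ) ≤ X + H) _
      have hdiv2 : Real.sqrt (X / (b:ℝ)^3) = Real.sqrt X / Real.sqrt ((b:ℝ)^3) :=
        Real.sqrt_div hXpos.le _
      have hmono : Real.sqrt X ≤ Real.sqrt (X+H) := Real.sqrt_le_sqrt (by linarith)
      have hdiff : Real.sqrt ((X+H) / (b:ℝ)^3) - Real.sqrt (X / (b:ℝ)^3)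
          ≤ Real.sqrt (X+H) - Real.sqrt X := by
        rw [hdiv1, hdiv2, div_sub_div_same]
        exact div_le_self (by linarith) hsqb1
      have : Real.sqrt ((X+H) / (b:ℝ)^3) - Real.sqrt (X / (b:ℝ)^3)
          ≤ H / (2 * Real.sqrt X) := by linarith
      linarith
  have h2 : (T.card : ℝ) ≤ (⌊B⌋₊ : ℝ) * (H / (2 * Real.sqrt X) + 1) := by
    have hc : T.card ≤ ∑ b ∈ Finset.Icc 1 ⌊B⌋₊,
        ((Finset.Ioc (lo b) (hi b)).image (fun a => (a, b))).card :=
      Finset.card_biUnion_le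
    calc (T.card : ℝ) ≤ ∑ b ∈ Finset.Icc 1 ⌊B⌋₊,
          (((Finset.Ioc (lo b) (hi b)).image (fun a => (a, b))).card : ℝ) := by
            exact_mod_cast hc
      _ ≤ ∑ _b ∈ Finset.Icc 1 ⌊B⌋₊, (H / (2 * Real.sqrt X) + 1) :=
          Finset.sum_le_sum termbound
      _ = ((Finset.Icc 1 ⌊B⌋₊).card : ℝ) * (H / (2 * Real.sqrt X) + 1) := by
          rw [Finset.sum_const, nsmul_eq_mul]
      _ = (⌊B⌋₊ : ℝ) * (H / (2 * Real.sqrt X) + 1) := by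
          rw [Nat.card_Icc]; norm_num
  have hfloorB : (⌊B⌋₊ : ℝ) ≤ B := Nat.floor_le (by linarith)
  have hrpow : X ^ (-(1:ℝ)/2) = (Real.sqrt X)⁻¹ := by
    rw [Real.sqrt_eq_rpow, ← Real.rpow_neg hXpos.le]
    norm_num
  have hbound : H / (2 * Real.sqrt X) ≤ H * X ^ (-(1:ℝ)/2) := by
    rw [hrpow, ← div_eq_mul_inv, div_le_div_iff₀ (by positivity) hsX]
    nlinarith [hsX]
  have hfinal : (⌊B⌋₊ : ℝ) * (H / (2 * Real.sqrt X) + 1)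
      ≤ H * X ^ (-(1:ℝ)/2) * B + B := by
    have hpos : (0:ℝ) ≤ H / (2 * Real.sqrt X) + 1 := by positivity
    have := mul_le_mul_of_nonneg_right hfloorB hpos
    have h3 : B * (H / (2 * Real.sqrt X) + 1) ≤ H * X ^ (-(1:ℝ)/2) * B + B := by
      have hBpos : (0:ℝ) ≤ B := by linarith
      nlinarith [hbound]
    linarith
  calc (S.ncard : ℝ) ≤ (T.card : ℝ) := h1
    _ ≤ (⌊B⌋₊ : ℝ) * (H / (2 * Real.sqrt X) + 1) := h2
    _ ≤ H * X ^ (-(1:ℝ)/2) * B + B := hfinal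
    _ = 1 * (H * X ^ (-(1:ℝ)/2) * B + B) := by ring
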